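/- Every finite interval nest digraph admits a nest representation in which every interval I_u and every interval J_u has positive length (i.e., is nondegenerate). -/
import Mathlib


/-- A nest representation of a digraph `E`: closed bounded (nonempty) real intervals
`I_u = [aI u, bI u]` and `J_u = [aJ u, bJ u]` with `J_u ⊆ I_u` for every vertex `u`,
such that `u → v` is an arc iff `I_u ∩ J_v ≠ ∅`. -/
def IsNestRepresentation {V : Type*} (E : V → V → Prop)
    (aI bI aJ bJ : V → ℝ) : Prop :=
  (∀ u, aI u ≤ bI u) ∧ (∀ u, aJ u ≤ bJ u) ∧
  (∀ u, Set.Icc (aJ u) (bJ u) ⊆ Set.Icc (aI u) (bI u)) ∧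
  (∀ u v, E u v ↔ (Set.Icc (aI u) (bI u) ∩ Set.Icc (aJ v) (bJ v)).Nonempty)

/-- An interval nest digraph is one admitting a nest representation. -/
def IsIntervalNestDigraph {V : Type*} (E : V → V → Prop) : Prop :=
  ∃ aI bI aJ bJ : V → ℝ, IsNestRepresentation E aI bI aJ bJ

/-- The arc `uv` is symmetric: both `uv` and `vu` are arcs. -/
def SymArc {V : Type*} (E : V → V → Prop) (u v : V) : Prop := E u v ∧ E v u

/-- A nest ordering of a digraph `E`: a linear order `le` on the vertices such that
for all `u ≤ v ≤ w ≤ z` (repetitions allowed) properties (i), (ii), (iii) hold. -/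
def IsNestOrdering {V : Type*} (E : V → V → Prop) (le : V → V → Prop) : Prop :=
  IsLinearOrder V le ∧
  ∀ u v w z : V, le u v → le v w → le w z →
    ((E u w ∧ E u z → E u v ∨ (SymArc E v w ∧ SymArc E v z ∧ SymArc E w z)) ∧
     (E z u ∧ E z v → E z w ∨ (SymArc E w u ∧ SymArc E v u ∧ SymArc E w v)) ∧
     (E u z ∧ E v w → E u w ∨ E v z) ∧
     (E z u ∧ E w v → E z v ∨ E w u) ∧
     (E u w ∧ E v z → E v w ∨ E u z) ∧
     (E z v ∧ E w u → E z u ∨ E w v))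

/-- Every finite interval nest digraph admits a nest representation in which every
interval `I_u` and every interval `J_u` has positive length. -/
theorem interval_nest_has_nondegenerate_representation
    {V : Type*} [Fintype V] (E : V → V → Prop)
    (h : IsIntervalNestDigraph E) :
    ∃ aI bI aJ bJ : V → ℝ, IsNestRepresentation E aI bI aJ bJ ∧
      (∀ u, aI u < bI u) ∧ (∀ u, aJ u < bJ u) := by
  classical
  obtain ⟨aI, bI, aJ, bJ, h1, h2, h3, h4⟩ := h
  have key : ∀ a b c d : ℝ, a ≤ b → c ≤ d →
      ((Set.Icc a b ∩ Set.Icc c d).Nonempty ↔ (a ≤ d ∧ c ≤ b)) := by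
    intro a b c d hab hcd
    rw [Set.Icc_inter_Icc, Set.nonempty_Icc]
    simp only [max_le_iff, le_min_iff]
    constructor
    · rintro ⟨⟨_, hy⟩, hx, _⟩; exact ⟨hx, hy⟩
    · rintro ⟨hx, hy⟩; exact ⟨⟨hab, hy⟩, hx, hcd⟩
  rcases isEmpty_or_nonempty V with hV | hV
  · exact ⟨fun _ => 0, fun _ => 1, fun _ => 0, fun _ => 1,
      ⟨fun u => hV.elim u, fun u => hV.elim u, fun u => hV.elim u, fun u => hV.elim u⟩,
      fun u => hV.elim u, fun u => hV.elim u⟩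
  · set f : V × V → ℝ :=
      fun p => if E p.1 p.2 then 1 else max (aI p.1 - bJ p.2) (aJ p.2 - bI p.1) with hf
    have hne : (Finset.univ : Finset (V × V)).Nonempty := Finset.univ_nonempty
    set ε : ℝ := (Finset.univ.inf' hne f) / 3 with hε
    have hfpos : ∀ p : V × V, 0 < f p := by
      intro p
      by_cases hE : E p.1 p.2
      · simp [hf, hE]
      · simp only [hf, hE, if_false]
        have := (key _ _ _ _ (h1 p.1) (h2 p.2)).not.mp ((not_iff_not.mpr (h4 p.1 p.2)).mp hE)
        rw [not_and_or, not_le, not_le] at this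
        rcases this with hlt | hlt
        · exact lt_max_of_lt_left (by linarith)
        · exact lt_max_of_lt_right (by linarith)
    have hεpos : 0 < ε := by
      have := Finset.lt_inf'_iff hne (f := f) (a := (0:ℝ))
      have h0 : 0 < Finset.univ.inf' hne f := this.mpr (fun p _ => hfpos p)
      linarith [h0]
    have hεle : ∀ u v, ¬ E u v → 3 * ε ≤ max (aI u - bJ v) (aJ v - bI u) := by
      intro u v hE
      have := Finset.inf'_le f (Finset.mem_univ (u, v))
      simpa [hf, hE, hε] using (by linarith [this] :
        3 * ε ≤ f (u, v))
    refine ⟨fun u => aI u - ε, fun u => bI u + ε, fun u => aJ u - ε, fun u => bJ u + ε,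
      ⟨fun u => show aI u - ε ≤ bI u + ε by linarith [h1 u, hεpos],
       fun u => show aJ u - ε ≤ bJ u + ε by linarith [h2 u, hεpos], ?_, ?_⟩,
      fun u => show aI u - ε < bI u + ε by linarith [h1 u, hεpos],
      fun u => show aJ u - ε < bJ u + ε by linarith [h2 u, hεpos]⟩
    · intro u
      have hs := (Set.Icc_subset_Icc_iff (h2 u)).mp (h3 u)
      exact Set.Icc_subset_Icc (by show aI u - ε ≤ aJ u - ε; linarith [hs.1])
        (by show bJ u + ε ≤ bI u + ε; linarith [hs.2])
    · intro u v
      rw [key _ _ _ _ (show aI u - ε ≤ bI u + ε by linarith [h1 u, hεpos])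
        (show aJ v - ε ≤ bJ v + ε by linarith [h2 v, hεpos])]
      constructor
      · intro hE
        have hx := (key _ _ _ _ (h1 u) (h2 v)).mp ((h4 u v).mp hE)
        exact ⟨show aI u - ε ≤ bJ v + ε by linarith [hx.1, hεpos],
          show aJ v - ε ≤ bI u + ε by linarith [hx.2, hεpos]⟩
      · intro hc
        have hc1 : aI u - ε ≤ bJ v + ε := hc.1
        have hc2 : aJ v - ε ≤ bI u + ε := hc.2
        by_contra hE
        have hm := hεle u v hE
        rcases max_cases (aI u - bJ v) (aJ v - bI u) with ⟨heq, _⟩ | ⟨heq, _⟩ <;>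
          rw [heq] at hm <;> [linarith; linarith]
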